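/- arXiv:2507.15097 — 2 statements merged into one kernel-verified Lean document; each statement's English description precedes it below -/
import Mathlib

section
/- Let G be a graph on p vertices with exactly k connected components C₁,...,C_k, and let L be its unnormalised Laplacian with eigenvalues 0 = λ₀ ≤ λ₁ ≤ ... and spectral gap λ_g (the smallest nonzero eigenvalue). For β ∈ ℝᵖ define Λ_t(β) = Σ_{ℓ=1}^p √|(e^{-tL}(β⊙β))_ℓ| and Λ_∞(β) = Σ_{j=1}^k √|C_j| · ‖β_{C_j}‖₂ (the group lasso penalty). If Ξ := e^{-tλ_g} ‖β⊙β‖₂ ≤ (1/2) min over active groups i (those with β_{C_i} ≠ 0) of ‖β_{C_i}‖₂²/|C_i|, then |Λ_t(β) − Λ_∞(β)| ≤ p·√Ξ. -/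
open Matrix NormedSpace in
private lemma sqrt_add_le_aux {x y : ℝ} (hx : 0 ≤ x) (hy : 0 ≤ y) :
    Real.sqrt (x + y) ≤ Real.sqrt x + Real.sqrt y := by
  have h : x + y ≤ (Real.sqrt x + Real.sqrt y) ^ 2 := by
    nlinarith [Real.sq_sqrt hx, Real.sq_sqrt hy, Real.sqrt_nonneg x, Real.sqrt_nonneg y,
      mul_nonneg (Real.sqrt_nonneg x) (Real.sqrt_nonneg y)]
  calc Real.sqrt (x + y) ≤ Real.sqrt ((Real.sqrt x + Real.sqrt y) ^ 2) := Real.sqrt_le_sqrt h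
    _ = Real.sqrt x + Real.sqrt y := Real.sqrt_sq (by positivity)

private lemma sqrt_sub_le_aux {x y : ℝ} (hx : 0 ≤ x) (hy : 0 ≤ y) :
    Real.sqrt x - Real.sqrt y ≤ Real.sqrt |x - y| := by
  rcases le_total x y with h | h
  · have h1 : Real.sqrt x ≤ Real.sqrt y := Real.sqrt_le_sqrt h
    have := Real.sqrt_nonneg |x - y|
    linarith
  · have h1 : x = y + (x - y) := by ring
    have h2 : Real.sqrt x ≤ Real.sqrt y + Real.sqrt (x - y) := by
      calc Real.sqrt x = Real.sqrt (y + (x - y)) := by rw [← h1]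
        _ ≤ Real.sqrt y + Real.sqrt (x - y) := sqrt_add_le_aux hy (by linarith)
    rw [abs_of_nonneg (by linarith)]
    linarith

private lemma abs_sqrt_sub_sqrt_le {a b : ℝ} (hb : 0 ≤ b) :
    |Real.sqrt |a| - Real.sqrt b| ≤ Real.sqrt |a - b| := by
  have h1 : |(|a| - b)| ≤ |a - b| := by
    have := abs_abs_sub_abs_le_abs_sub a b
    rwa [abs_of_nonneg hb] at this
  have h2 : Real.sqrt |(|a| - b)| ≤ Real.sqrt |a - b| := Real.sqrt_le_sqrt h1
  rcases abs_cases (Real.sqrt |a| - Real.sqrt b) with ⟨h, _⟩ | ⟨h, _⟩ <;> rw [h]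
  · exact (sqrt_sub_le_aux (abs_nonneg a) hb).trans h2
  · have h4 : Real.sqrt b - Real.sqrt |a| ≤ Real.sqrt |(b - |a|)| :=
      sqrt_sub_le_aux hb (abs_nonneg a)
    have h5 : |(b - |a|)| = |(|a| - b)| := abs_sub_comm _ _
    rw [h5] at h4
    linarith

open Matrix NormedSpace in
/-- Comparison of the heat-flow penalty `Λ_t` with the group lasso penalty `Λ_∞`:
for a graph whose connected components are the groups `C₁,…,C_k` (so the Laplacian
kills the component indicators and has spectral gap `λ_g` on their orthocomplement),
if `Ξ = e^{-tλ_g}‖β⊙β‖₂` is at most half of `‖β_{Cᵢ}‖₂²/|Cᵢ|` for every active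
group `i`, then `|Λ_t(β) − Λ_∞(β)| ≤ p·√Ξ`. -/
theorem heatflow_penalty_close_to_groupLasso
    {p k : ℕ} (C : Fin k → Finset (Fin p))
    (hne : ∀ i, (C i).Nonempty)
    (hdisj : ∀ i j, i ≠ j → Disjoint (C i) (C j))
    (hcover : ∀ v, ∃ i, v ∈ C i)
    (L : Matrix (Fin p) (Fin p) ℝ) (hL : L.PosSemidef)
    (hker : ∀ i, L *ᵥ (fun v => if v ∈ C i then (1:ℝ) else 0) = 0)
    (lamg t : ℝ) (hlamg : 0 < lamg) (ht : 0 ≤ t)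
    (hgap : ∀ x : Fin p → ℝ, (∀ i, ∑ v ∈ C i, x v = 0) →
      lamg * (∑ v, x v ^ 2) ≤ x ⬝ᵥ (L *ᵥ x))
    (β : Fin p → ℝ)
    (hΞ : ∀ i, (∃ v ∈ C i, β v ≠ 0) →
      Real.exp (-(t * lamg)) * Real.sqrt (∑ v, (β v ^ 2) ^ 2) ≤
        (1 / 2) * ((∑ v ∈ C i, β v ^ 2) / (C i).card)) :
    |(∑ ℓ, Real.sqrt |(NormedSpace.exp (-(t • L)) *ᵥ (fun v => β v * β v)) ℓ|) -
        ∑ j, Real.sqrt ((C j).card) * Real.sqrt (∑ v ∈ C j, β v ^ 2)| ≤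
      p * Real.sqrt (Real.exp (-(t * lamg)) * Real.sqrt (∑ v, (β v ^ 2) ^ 2)) := by
  classical
  set η : Fin p → ℝ := fun v => β v * β v with hηdef
  have hηnn : ∀ v, 0 ≤ η v := fun v => mul_self_nonneg _
  choose comp hcomp using hcover
  have huniq : ∀ {i v}, v ∈ C i → comp v = i := by
    intro i v hv
    by_contra h
    exact (Finset.disjoint_left.1 (hdisj _ _ h)) (hcomp v) hv
  have hpart : ∀ f : Fin p → ℝ, ∑ v, f v = ∑ j, ∑ v ∈ C j, f v := by
    intro f
    have huniv : (Finset.univ : Finset (Fin p)) = Finset.univ.biUnion C := by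
      ext v
      simpa using ⟨comp v, hcomp v⟩
    rw [show (∑ v, f v) = ∑ v ∈ (Finset.univ : Finset (Fin p)), f v from rfl, huniv,
      Finset.sum_biUnion]
    intro i _ j _ hij
    exact hdisj i j hij
  have hcardpos : ∀ i, (0:ℝ) < (C i).card := by
    intro i
    exact_mod_cast Finset.card_pos.2 (hne i)
  -- the averaging operator
  set avg : (Fin p → ℝ) → Fin p → ℝ :=
    fun z v => (∑ w ∈ C (comp v), z w) / (C (comp v)).card with havgdef
  have havg_mem : ∀ (z : Fin p → ℝ) (i : Fin k), ∀ v ∈ C i,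
      avg z v = (∑ w ∈ C i, z w) / (C i).card := by
    intro z i v hv
    simp only [havgdef, huniq hv]
  have hA1 : ∀ (z : Fin p → ℝ) (i : Fin k), ∑ v ∈ C i, (z v - avg z v) = 0 := by
    intro z i
    rw [Finset.sum_sub_distrib]
    rw [Finset.sum_congr rfl (havg_mem z i), Finset.sum_const, nsmul_eq_mul]
    field_simp
    ring
  have havg_ite : ∀ (z : Fin p → ℝ) (v : Fin p),
      avg z v = ∑ j, (if v ∈ C j then (∑ w ∈ C j, z w) / (C j).card else 0) := by
    intro z v
    rw [Finset.sum_eq_single (comp v)]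
    · simp [havgdef, hcomp v]
    · intro j _ hj
      rw [if_neg]
      intro hv
      exact hj (huniq hv).symm
    · simp
  have hA2 : ∀ z : Fin p → ℝ, L *ᵥ avg z = 0 := by
    intro z
    funext a
    show ∑ v, L a v * avg z v = 0
    calc ∑ v, L a v * avg z v
        = ∑ v, ∑ j, ((∑ w ∈ C j, z w) / (C j).card) *
            (L a v * (if v ∈ C j then (1:ℝ) else 0)) := by
          refine Finset.sum_congr rfl fun v _ => ?_
          rw [havg_ite z v, Finset.mul_sum]
          refine Finset.sum_congr rfl fun j _ => ?_
          split_ifs <;> ring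
      _ = ∑ j, ((∑ w ∈ C j, z w) / (C j).card) *
            ∑ v, L a v * (if v ∈ C j then (1:ℝ) else 0) := by
          rw [Finset.sum_comm]
          exact Finset.sum_congr rfl fun j _ => (Finset.mul_sum _ _ _).symm
      _ = 0 := by
          refine Finset.sum_eq_zero fun j _ => ?_
          have := congrFun (hker j) a
          simp only [Pi.zero_apply] at this
          rw [show ∑ v, L a v * (if v ∈ C j then (1:ℝ) else 0) = 0 from this, mul_zero]
  have hA3 : ∀ (z y : Fin p → ℝ), (∀ i, ∑ v ∈ C i, y v = 0) →
      ∑ v, avg z v * y v = 0 := by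
    intro z y hy
    rw [hpart fun v => avg z v * y v]
    refine Finset.sum_eq_zero fun j _ => ?_
    calc ∑ v ∈ C j, avg z v * y v
        = ∑ v ∈ C j, ((∑ w ∈ C j, z w) / (C j).card) * y v := by
          refine Finset.sum_congr rfl fun v hv => ?_
          rw [havg_mem z j v hv]
      _ = ((∑ w ∈ C j, z w) / (C j).card) * ∑ v ∈ C j, y v := (Finset.mul_sum _ _ _).symm
      _ = 0 := by rw [hy j, mul_zero]
  -- spectral setup
  have hH : L.IsHermitian := hL.1
  set U : Matrix (Fin p) (Fin p) ℝ := (hH.eigenvectorUnitary : Matrix (Fin p) (Fin p) ℝ)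
    with hUdef
  set μ : Fin p → ℝ := hH.eigenvalues with hμdef
  have hUU : U * star U = 1 := Matrix.mem_unitaryGroup_iff.mp hH.eigenvectorUnitary.2
  have hUU' : star U * U = 1 := Matrix.mem_unitaryGroup_iff'.mp hH.eigenvectorUnitary.2
  have hUunit : IsUnit U := ⟨⟨U, star U, hUU, hUU'⟩, rfl⟩
  have hUinv : U⁻¹ = star U := Matrix.inv_eq_right_inv hUU
  have hspec : L = U * Matrix.diagonal μ * star U := by
    have h := hH.spectral_theorem
    simpa [Function.comp] using h
  have hexp : NormedSpace.exp (-(t • L)) =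
      U * Matrix.diagonal (fun i => Real.exp (-(t * μ i))) * star U := by
    have hD : Matrix.diagonal (fun i => -(t * μ i)) = -(t • Matrix.diagonal μ) := by
      rw [← Matrix.diagonal_smul, ← Matrix.diagonal_neg]
      rfl
    have h1 : -(t • L) = U * Matrix.diagonal (fun i => -(t * μ i)) * U⁻¹ := by
      rw [hUinv, hD, hspec, Matrix.mul_neg, Matrix.neg_mul, Matrix.mul_smul, Matrix.smul_mul]
    rw [h1, Matrix.exp_conj U _ hUunit, Matrix.exp_diagonal, hUinv]
    rw [Pi.exp_def, ← Real.exp_eq_exp_ℝ]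
  -- eigencolumn facts
  have hcol : ∀ i, L *ᵥ (fun a => U a i) = μ i • (fun a => U a i) := by
    intro i
    have h := hH.mulVec_eigenvectorBasis i
    have he : (fun a => U a i) = ⇑(hH.eigenvectorBasis i) := by
      funext a
      exact hH.eigenvectorUnitary_apply a i
    rw [he]
    exact_mod_cast h
  have hcolnorm : ∀ i, ∑ a, U a i ^ 2 = 1 := by
    intro i
    have h := congrFun (congrFun hUU' i) i
    simp only [Matrix.mul_apply, Matrix.star_apply, star_trivial, Matrix.one_apply_eq] at h
    calc ∑ a, U a i ^ 2 = ∑ a, U a i * U a i := by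
          refine Finset.sum_congr rfl fun a _ => sq (U a i) ▸ by ring
      _ = 1 := h
  have hrownorm : ∀ a, ∑ i, U a i ^ 2 = 1 := by
    intro a
    have h := congrFun (congrFun hUU a) a
    simp only [Matrix.mul_apply, Matrix.star_apply, star_trivial, Matrix.one_apply_eq] at h
    calc ∑ i, U a i ^ 2 = ∑ i, U a i * U a i := by
          refine Finset.sum_congr rfl fun i _ => sq (U a i) ▸ by ring
      _ = 1 := h
  have horow : ∀ a b, ∑ i, U a i * U b i = if a = b then (1:ℝ) else 0 := by
    intro a b
    have h := congrFun (congrFun hUU a) b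
    simp only [Matrix.mul_apply, Matrix.star_apply, star_trivial] at h
    rw [h]
    simp [Matrix.one_apply]
  have hsym : ∀ v w, L v w = L w v := by
    intro v w
    have := hH.apply v w
    simpa using this.symm
  have hind : ∀ (i : Fin k) (w : Fin p), ∑ v ∈ C i, L w v = 0 := by
    intro i w
    have h := congrFun (hker i) w
    simp only [Pi.zero_apply, Matrix.mulVec, dotProduct] at h
    calc ∑ v ∈ C i, L w v
        = ∑ v, L w v * (if v ∈ C i then (1:ℝ) else 0) := by
          simp only [mul_ite, mul_one, mul_zero, Finset.sum_ite_mem, Finset.univ_inter]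
      _ = 0 := h
  have hLrange : ∀ (z : Fin p → ℝ) (i : Fin k), ∑ v ∈ C i, (L *ᵥ z) v = 0 := by
    intro z i
    calc ∑ v ∈ C i, (L *ᵥ z) v = ∑ v ∈ C i, ∑ w, L v w * z w := rfl
      _ = ∑ w, ∑ v ∈ C i, L v w * z w := Finset.sum_comm
      _ = ∑ w, (∑ v ∈ C i, L v w) * z w := by
          refine Finset.sum_congr rfl fun w _ => ?_
          rw [Finset.sum_mul]
      _ = 0 := by
          refine Finset.sum_eq_zero fun w _ => ?_
          have : ∑ v ∈ C i, L v w = ∑ v ∈ C i, L w v :=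
            Finset.sum_congr rfl fun v _ => hsym v w
          rw [this, hind i w, zero_mul]
  have hker0 : ∀ u : Fin p → ℝ, L *ᵥ u = 0 → u = avg u := by
    intro u hu
    have h1 : L *ᵥ (fun v => u v - avg u v) = 0 := by
      have he : (fun v => u v - avg u v) = u - avg u := rfl
      rw [he, Matrix.mulVec_sub, hu, hA2, sub_zero]
    have h2 := hgap _ (hA1 u)
    rw [h1] at h2
    rw [dotProduct_zero] at h2
    have hnn : 0 ≤ ∑ v, (u v - avg u v)^2 := Finset.sum_nonneg fun v _ => sq_nonneg _
    have h3 : ∑ v, (u v - avg u v)^2 = 0 := by nlinarith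
    funext v
    have h4 := (Finset.sum_eq_zero_iff_of_nonneg (fun v _ => sq_nonneg _)).1 h3 v
      (Finset.mem_univ v)
    have h5 : u v - avg u v = 0 := by
      have := pow_eq_zero_iff (n := 2) (by norm_num) |>.1 h4
      exact this
    linarith
  have hcases : ∀ i, μ i = 0 ∨ lamg ≤ μ i := by
    intro i
    by_cases h0 : μ i = 0
    · exact Or.inl h0
    refine Or.inr ?_
    have hLu : L *ᵥ (fun a => U a i) = μ i • (fun a => U a i) := hcol i
    have huV : ∀ j, ∑ v ∈ C j, U v i = 0 := by
      intro j
      have h1 := hLrange (fun a => U a i) j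
      rw [hLu] at h1
      simp only [Pi.smul_apply, smul_eq_mul] at h1
      rw [← Finset.mul_sum] at h1
      exact (mul_eq_zero.1 h1).resolve_left h0
    have h2 := hgap (fun a => U a i) huV
    have h3 : (fun a => U a i) ⬝ᵥ (L *ᵥ (fun a => U a i)) = μ i * ∑ v, U v i ^ 2 := by
      rw [hLu]
      simp only [dotProduct, Pi.smul_apply, smul_eq_mul]
      rw [Finset.mul_sum]
      exact Finset.sum_congr rfl fun v _ => by ring
    rw [h3, hcolnorm i] at h2
    nlinarith
  have hzero : ∀ i, μ i = 0 → ∀ y : Fin p → ℝ, (∀ j, ∑ v ∈ C j, y v = 0) →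
      ∑ a, U a i * y a = 0 := by
    intro i h0 y hy
    have hLu : L *ᵥ (fun a => U a i) = 0 := by
      rw [hcol i, h0, zero_smul]
    have he := hker0 _ hLu
    calc ∑ a, U a i * y a = ∑ a, avg (fun a => U a i) a * y a := by
          refine Finset.sum_congr rfl fun a _ => ?_
          rw [← congrFun he a]
      _ = 0 := hA3 _ y hy
  -- main contraction estimate on the orthocomplement
  have hmain : ∀ y : Fin p → ℝ, (∀ j, ∑ v ∈ C j, y v = 0) → ∀ a,
      |(NormedSpace.exp (-(t • L)) *ᵥ y) a| ≤
        Real.exp (-(t * lamg)) * Real.sqrt (∑ v, y v ^ 2) := by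
    intro y hy a
    set c : Fin p → ℝ := fun i => ∑ b, U b i * y b with hcdef
    have hcy : ∑ i, c i ^ 2 = ∑ v, y v ^ 2 := by
      calc ∑ i, c i ^ 2
          = ∑ i, ∑ a', ∑ b, (U a' i * y a') * (U b i * y b) := by
            refine Finset.sum_congr rfl fun i _ => ?_
            rw [sq, hcdef, Finset.sum_mul_sum]
        _ = ∑ a', ∑ b, (y a' * y b) * ∑ i, U a' i * U b i := by
            rw [Finset.sum_comm]
            refine Finset.sum_congr rfl fun a' _ => ?_
            rw [Finset.sum_comm]
            refine Finset.sum_congr rfl fun b _ => ?_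
            rw [Finset.mul_sum]
            exact Finset.sum_congr rfl fun i _ => by ring
        _ = ∑ v, y v ^ 2 := by
            refine Finset.sum_congr rfl fun a' _ => ?_
            simp only [horow, mul_ite, mul_one, mul_zero]
            rw [Finset.sum_ite_eq Finset.univ a' (fun b => y a' * y b)]
            simp [sq]
    have hentry : (NormedSpace.exp (-(t • L)) *ᵥ y) a
        = ∑ i, U a i * (Real.exp (-(t * μ i)) * c i) := by
      rw [hexp, ← Matrix.mulVec_mulVec, ← Matrix.mulVec_mulVec]
      have h1 : star U *ᵥ y = c := by
        funext i
        simp [Matrix.mulVec, dotProduct, Matrix.star_apply, hcdef]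
      rw [h1]
      have h2 : Matrix.diagonal (fun i => Real.exp (-(t * μ i))) *ᵥ c
          = fun i => Real.exp (-(t * μ i)) * c i := by
        funext i
        rw [Matrix.mulVec_diagonal]
      rw [h2]
      rfl
    have hterm : ∀ i, (Real.exp (-(t * μ i)) * c i) ^ 2
        ≤ Real.exp (-(t * lamg)) ^ 2 * c i ^ 2 := by
      intro i
      rcases eq_or_ne (c i) 0 with h | h
      · simp [h]
      · have hμi : lamg ≤ μ i := by
          rcases hcases i with h0 | h1
          · exact absurd (hzero i h0 y hy) h
          · exact h1
        have he : Real.exp (-(t * μ i)) ≤ Real.exp (-(t * lamg)) :=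
          Real.exp_le_exp.2 (by nlinarith)
        have h2 : Real.exp (-(t * μ i)) ^ 2 ≤ Real.exp (-(t * lamg)) ^ 2 :=
          pow_le_pow_left₀ (Real.exp_pos _).le he 2
        calc (Real.exp (-(t * μ i)) * c i) ^ 2
            = Real.exp (-(t * μ i)) ^ 2 * c i ^ 2 := mul_pow _ _ _
          _ ≤ Real.exp (-(t * lamg)) ^ 2 * c i ^ 2 :=
              mul_le_mul_of_nonneg_right h2 (sq_nonneg _)
    have hCS : (∑ i, U a i * (Real.exp (-(t * μ i)) * c i)) ^ 2
        ≤ ∑ i, (Real.exp (-(t * μ i)) * c i) ^ 2 := by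
      have h := Finset.sum_mul_sq_le_sq_mul_sq Finset.univ (fun i => U a i)
        (fun i => Real.exp (-(t * μ i)) * c i)
      simpa [hrownorm a] using h
    have hsum2 : ∑ i, (Real.exp (-(t * μ i)) * c i) ^ 2
        ≤ Real.exp (-(t * lamg)) ^ 2 * ∑ v, y v ^ 2 := by
      calc ∑ i, (Real.exp (-(t * μ i)) * c i) ^ 2
          ≤ ∑ i, Real.exp (-(t * lamg)) ^ 2 * c i ^ 2 :=
            Finset.sum_le_sum fun i _ => hterm i
        _ = Real.exp (-(t * lamg)) ^ 2 * ∑ i, c i ^ 2 := (Finset.mul_sum _ _ _).symm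
        _ = _ := by rw [hcy]
    rw [hentry]
    calc |∑ i, U a i * (Real.exp (-(t * μ i)) * c i)|
        = Real.sqrt ((∑ i, U a i * (Real.exp (-(t * μ i)) * c i)) ^ 2) :=
          (Real.sqrt_sq_eq_abs _).symm
      _ ≤ Real.sqrt (Real.exp (-(t * lamg)) ^ 2 * ∑ v, y v ^ 2) :=
          Real.sqrt_le_sqrt (hCS.trans hsum2)
      _ = Real.exp (-(t * lamg)) * Real.sqrt (∑ v, y v ^ 2) := by
          rw [Real.sqrt_mul (sq_nonneg _), Real.sqrt_sq (Real.exp_pos _).le]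
  -- the heat flow fixes the averaged vector
  set ηb : Fin p → ℝ := avg η with hηb
  have hfix : NormedSpace.exp (-(t • L)) *ᵥ ηb = ηb := by
    have hLηb : L *ᵥ ηb = 0 := hA2 η
    have hsUL : Matrix.diagonal μ * star U = star U * L := by
      rw [hspec, ← Matrix.mul_assoc, ← Matrix.mul_assoc, hUU', Matrix.one_mul]
    have hd : ∀ i, μ i * (star U *ᵥ ηb) i = 0 := by
      intro i
      have h1 : Matrix.diagonal μ *ᵥ (star U *ᵥ ηb) = star U *ᵥ (L *ᵥ ηb) := by
        rw [Matrix.mulVec_mulVec, Matrix.mulVec_mulVec, hsUL]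
      rw [hLηb, Matrix.mulVec_zero] at h1
      have h2 := congrFun h1 i
      rwa [Matrix.mulVec_diagonal] at h2
    have hE : Matrix.diagonal (fun i => Real.exp (-(t * μ i))) *ᵥ (star U *ᵥ ηb)
        = star U *ᵥ ηb := by
      funext i
      rw [Matrix.mulVec_diagonal]
      rcases eq_or_ne (μ i) 0 with h | h
      · rw [h]
        simp
      · have h0 : (star U *ᵥ ηb) i = 0 := (mul_eq_zero.1 (hd i)).resolve_left h
        rw [h0, mul_zero]
    rw [hexp, ← Matrix.mulVec_mulVec, ← Matrix.mulVec_mulVec, hE, Matrix.mulVec_mulVec,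
      hUU, Matrix.one_mulVec]
  have hηbnn : ∀ v, 0 ≤ ηb v :=
    fun v => div_nonneg (Finset.sum_nonneg fun w _ => hηnn w) (Nat.cast_nonneg _)
  have hyV : ∀ i, ∑ v ∈ C i, (η v - ηb v) = 0 := hA1 η
  have hysum : ∑ v, (η v - ηb v) ^ 2 ≤ ∑ v, (β v ^ 2) ^ 2 := by
    have horth : ∑ v, ηb v * (η v - ηb v) = 0 := hA3 η _ hyV
    have hexpand : ∑ v, η v ^ 2
        = ∑ v, ((η v - ηb v) ^ 2 + (2 * (ηb v * (η v - ηb v)) + ηb v ^ 2)) :=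
      Finset.sum_congr rfl fun v _ => by ring
    rw [Finset.sum_add_distrib, Finset.sum_add_distrib, ← Finset.mul_sum, horth] at hexpand
    have hb2 : 0 ≤ ∑ v, ηb v ^ 2 := Finset.sum_nonneg fun v _ => sq_nonneg _
    have hηsq : ∑ v, η v ^ 2 = ∑ v, (β v ^ 2) ^ 2 :=
      Finset.sum_congr rfl fun v _ => by simp only [hηdef]; ring
    linarith
  have hptwise : ∀ a, |(NormedSpace.exp (-(t • L)) *ᵥ η) a - ηb a|
      ≤ Real.exp (-(t * lamg)) * Real.sqrt (∑ v, (β v ^ 2) ^ 2) := by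
    intro a
    have hsplit : (NormedSpace.exp (-(t • L)) *ᵥ η) a - ηb a
        = (NormedSpace.exp (-(t • L)) *ᵥ (fun v => η v - ηb v)) a := by
      have hηeq : η = (fun v => η v - ηb v) + ηb := by
        funext v
        simp
      conv_lhs => rw [hηeq]
      rw [Matrix.mulVec_add, hfix]
      simp
    rw [hsplit]
    refine (hmain _ hyV a).trans ?_
    exact mul_le_mul_of_nonneg_left (Real.sqrt_le_sqrt hysum) (Real.exp_pos _).le
  -- rewriting the group lasso penalty
  have hΛ : ∑ j, Real.sqrt ((C j).card) * Real.sqrt (∑ v ∈ C j, β v ^ 2)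
      = ∑ ℓ, Real.sqrt (ηb ℓ) := by
    rw [hpart (fun ℓ => Real.sqrt (ηb ℓ))]
    refine Finset.sum_congr rfl fun j _ => ?_
    have h1 : ∀ v ∈ C j, Real.sqrt (ηb v) = Real.sqrt ((∑ w ∈ C j, η w) / (C j).card) :=
      fun v hv => by rw [hηb, havg_mem η j v hv]
    rw [Finset.sum_congr rfl h1, Finset.sum_const, nsmul_eq_mul]
    have hS : ∑ w ∈ C j, η w = ∑ w ∈ C j, β w ^ 2 :=
      Finset.sum_congr rfl fun w _ => by simp only [hηdef]; ring
    rw [hS]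
    have hc := hcardpos j
    have hSnn : 0 ≤ ∑ w ∈ C j, β w ^ 2 := Finset.sum_nonneg fun w _ => sq_nonneg _
    rw [Real.sqrt_div hSnn]
    have h2 : (0:ℝ) < Real.sqrt ((C j).card) := Real.sqrt_pos.2 hc
    rw [show ((C j).card : ℝ) = Real.sqrt ((C j).card) * Real.sqrt ((C j).card) from
      (Real.mul_self_sqrt hc.le).symm]
    rw [Real.sqrt_mul_self h2.le]
    rw [mul_div_assoc', eq_div_iff h2.ne']
    ring
  rw [hΛ, ← Finset.sum_sub_distrib]
  refine (Finset.abs_sum_le_sum_abs _ _).trans ?_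
  have hbound : ∀ ℓ ∈ (Finset.univ : Finset (Fin p)),
      |Real.sqrt |(NormedSpace.exp (-(t • L)) *ᵥ η) ℓ| - Real.sqrt (ηb ℓ)|
        ≤ Real.sqrt (Real.exp (-(t * lamg)) * Real.sqrt (∑ v, (β v ^ 2) ^ 2)) := by
    intro ℓ _
    refine (abs_sqrt_sub_sqrt_le (hηbnn ℓ)).trans ?_
    exact Real.sqrt_le_sqrt (hptwise ℓ)
  refine (Finset.sum_le_card_nsmul _ _ _ hbound).trans ?_
  rw [Finset.card_univ, Fintype.card_fin, nsmul_eq_mul]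
end

section
/- With the heat-flow penalty Λ_t as above on a graph whose components are C₁,...,C_k, for every β ∈ ℝᵖ, lim_{t→∞} Λ_t(β) = Σ_{j=1}^k √|C_j| ‖β_{C_j}‖₂, i.e., the heat-flow penalty converges pointwise to the group lasso penalty as t → ∞. -/
open Matrix NormedSpace in
lemma exp_mulVec_eigen {p : ℕ} (A : Matrix (Fin p) (Fin p) ℝ) (u : Fin p → ℝ) (μ : ℝ)
    (h : A *ᵥ u = μ • u) : NormedSpace.exp A *ᵥ u = Real.exp μ • u := by
  letI : SeminormedRing (Matrix (Fin p) (Fin p) ℝ) := Matrix.linftyOpSemiNormedRing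
  letI : NormedRing (Matrix (Fin p) (Fin p) ℝ) := Matrix.linftyOpNormedRing
  letI : NormedAlgebra ℝ (Matrix (Fin p) (Fin p) ℝ) := Matrix.linftyOpNormedAlgebra
  have hpow : ∀ n : ℕ, A ^ n *ᵥ u = μ ^ n • u := by
    intro n
    induction n with
    | zero => simp
    | succ n ih =>
        rw [pow_succ', ← Matrix.mulVec_mulVec, ih, Matrix.mulVec_smul, h, smul_smul,
          ← pow_succ]
  let T : Matrix (Fin p) (Fin p) ℝ →ₗ[ℝ] (Fin p → ℝ) :=
    { toFun := fun M => M *ᵥ u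
      map_add' := fun M N => Matrix.add_mulVec M N u
      map_smul' := fun c M => by simp [Matrix.smul_mulVec] }
  have hT : Continuous T := T.continuous_of_finiteDimensional
  have hsum : Summable (fun n : ℕ => ((Nat.factorial n : ℝ))⁻¹ • A ^ n) := expSeries_summable' A
  have h1 : NormedSpace.exp A *ᵥ u = ∑' n : ℕ, T (((Nat.factorial n : ℝ))⁻¹ • A ^ n) := by
    rw [exp_eq_tsum ℝ]
    exact ((hsum.hasSum.map T hT).tsum_eq).symm
  rw [h1]
  have h2 : ∀ n : ℕ, T (((Nat.factorial n : ℝ))⁻¹ • A ^ n) = (((Nat.factorial n : ℝ))⁻¹ * μ ^ n) • u := by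
    intro n
    simp only [_root_.map_smul, T, LinearMap.coe_mk, AddHom.coe_mk, hpow, smul_smul]
  simp_rw [h2]
  have hsum2 : Summable (fun n : ℕ => ((Nat.factorial n : ℝ))⁻¹ * μ ^ n) := by
    simpa [smul_eq_mul] using (expSeries_summable' (𝕂 := ℝ) (𝔸 := ℝ) μ)
  rw [Summable.tsum_smul_const]
  · congr 1
    rw [Real.exp_eq_exp_ℝ, exp_eq_tsum ℝ]; simp [smul_eq_mul]
  · exact hsum2

open Matrix NormedSpace in
/-- The heat-flow penalty converges pointwise, as `t → ∞`, to the group lasso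
penalty `Σⱼ √|Cⱼ| ‖β_{Cⱼ}‖₂`, for a graph whose connected components are the
groups `C₁,…,C_k` (the Laplacian kills the component indicators and is positive
definite on their orthocomplement). -/
theorem heatflow_penalty_tendsto_groupLasso
    {p k : ℕ} (C : Fin k → Finset (Fin p))
    (hne : ∀ i, (C i).Nonempty)
    (hdisj : ∀ i j, i ≠ j → Disjoint (C i) (C j))
    (hcover : ∀ v, ∃ i, v ∈ C i)
    (L : Matrix (Fin p) (Fin p) ℝ) (hL : L.PosSemidef)
    (hker : ∀ i, L *ᵥ (fun v => if v ∈ C i then (1:ℝ) else 0) = 0)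
    (hpos : ∀ x : Fin p → ℝ, (∀ i, ∑ v ∈ C i, x v = 0) → x ≠ 0 → 0 < x ⬝ᵥ (L *ᵥ x))
    (β : Fin p → ℝ) :
    Filter.Tendsto
      (fun t : ℝ =>
        ∑ ℓ, Real.sqrt |(NormedSpace.exp (-(t • L)) *ᵥ (fun v => β v * β v)) ℓ|)
      Filter.atTop
      (nhds (∑ j, Real.sqrt ((C j).card) * Real.sqrt (∑ v ∈ C j, β v ^ 2))) := by
  classical
  set y : Fin p → ℝ := fun v => β v * β v with hy
  -- component index
  have hc : ∀ v, v ∈ C ((hcover v).choose) := fun v => (hcover v).choose_spec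
  set c : Fin p → Fin k := fun v => (hcover v).choose with hcdef
  have huniq : ∀ v j, v ∈ C j → c v = j := by
    intro v j hv
    by_contra hne'
    exact (Finset.disjoint_left.mp (hdisj _ _ hne')) (hc v) hv
  set S : Fin k → ℝ := fun j => ∑ v ∈ C j, β v ^ 2 with hS
  have hS0 : ∀ j, 0 ≤ S j := fun j => Finset.sum_nonneg (fun v _ => sq_nonneg _)
  set w : Fin p → ℝ := fun v => S (c v) / (C (c v)).card with hw
  have hwmem : ∀ j, ∀ v ∈ C j, w v = S j / (C j).card := by
    intro j v hv; simp [hw, huniq v j hv]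
  have hcard : ∀ j, (0:ℝ) < (C j).card := by
    intro j; exact_mod_cast (hne j).card_pos
  -- w as a combination of indicators
  have hwcomb : w = ∑ j, (S j / (C j).card) • (fun v => if v ∈ C j then (1:ℝ) else 0) := by
    funext v
    rw [Finset.sum_apply]
    rw [Finset.sum_eq_single (c v)]
    · simp [show v ∈ C (c v) from hc v, hw]
    · intro j _ hj
      have : v ∉ C j := fun hv => hj ((huniq v j hv).symm)
      simp [this]
    · simp
  have hLw : L *ᵥ w = 0 := by
    rw [hwcomb, ← Matrix.mulVecLin_apply, map_sum]
    refine Finset.sum_eq_zero fun j _ => ?_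
    rw [_root_.map_smul, Matrix.mulVecLin_apply, hker j, smul_zero]
  set z : Fin p → ℝ := fun v => y v - w v with hz
  have hzsum : ∀ j, ∑ v ∈ C j, z v = 0 := by
    intro j
    have : ∑ v ∈ C j, w v = S j := by
      rw [Finset.sum_congr rfl (hwmem j), Finset.sum_const, nsmul_eq_mul,
        mul_div_cancel₀ _ (ne_of_gt (hcard j))]
    simp only [hz, Finset.sum_sub_distrib, this, hS, hy]
    simp [sq]
  have hpart : ∀ f : Fin p → ℝ, ∑ v, f v = ∑ j, ∑ v ∈ C j, f v := by
    intro f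
    have huniv : (Finset.univ : Finset (Fin p)) = Finset.univ.biUnion C := by
      ext v; simp [hcover v]
    rw [huniv, Finset.sum_biUnion]
    intro i _ j _ hij
    exact hdisj i j hij
  -- kernel characterization
  have hkerchar : ∀ x : Fin p → ℝ, L *ᵥ x = 0 → x ⬝ᵥ z = 0 := by
    intro x hx
    set a : Fin k → ℝ := fun j => (∑ v ∈ C j, x v) / (C j).card with ha
    set x' : Fin p → ℝ := fun v => x v - a (c v) with hx'
    have hx'comb : x' = x - ∑ j, a j • (fun v => if v ∈ C j then (1:ℝ) else 0) := by
      funext v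
      rw [Pi.sub_apply, Finset.sum_apply, Finset.sum_eq_single (c v)]
      · simp [show v ∈ C (c v) from hc v, hx']
      · intro j _ hj
        have : v ∉ C j := fun hv => hj ((huniq v j hv).symm)
        simp [this]
      · simp
    have hLx' : L *ᵥ x' = 0 := by
      rw [hx'comb, ← Matrix.mulVecLin_apply, map_sub, map_sum, Matrix.mulVecLin_apply, hx]
      rw [Finset.sum_congr rfl (fun j _ => by rw [_root_.map_smul, Matrix.mulVecLin_apply, hker j, smul_zero])]
      simp
    have hx'sum : ∀ j, ∑ v ∈ C j, x' v = 0 := by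
      intro j
      have h1 : ∀ v ∈ C j, x' v = x v - a j := by
        intro v hv; simp [hx', huniq v j hv]
      rw [Finset.sum_congr rfl h1, Finset.sum_sub_distrib, Finset.sum_const, nsmul_eq_mul, ha,
        mul_div_cancel₀ _ (ne_of_gt (hcard j)), sub_self]
    have hx'0 : x' = 0 := by
      by_contra h0
      have := hpos x' hx'sum h0
      rw [hLx'] at this
      simp at this
    have hxe : x = fun v => a (c v) := by
      funext v
      have := congrFun hx'0 v
      simp only [hx', Pi.zero_apply] at this
      linarith
    rw [hxe]
    have : (fun v => a (c v)) ⬝ᵥ z = ∑ j, a j * (∑ v ∈ C j, z v) := by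
      rw [dotProduct, hpart (fun v => a (c v) * z v)]
      refine Finset.sum_congr rfl fun j _ => ?_
      rw [Finset.mul_sum]
      exact Finset.sum_congr rfl fun v hv => by rw [huniq v j hv]
    rw [this]
    simp [hzsum]
  -- spectral decomposition
  have hH : L.IsHermitian := hL.1
  set b := hH.eigenvectorBasis with hb
  set lam := hH.eigenvalues with hlam
  have hlam0 : ∀ i, 0 ≤ lam i := hL.eigenvalues_nonneg
  set zE : EuclideanSpace ℝ (Fin p) := WithLp.toLp 2 z with hzE
  set r : Fin p → ℝ := fun i => b.repr zE i with hr
  set u : Fin p → Fin p → ℝ := fun i => b i with hu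
  have hLu : ∀ i, L *ᵥ u i = lam i • u i := fun i => hH.mulVec_eigenvectorBasis i
  have hzdecomp : z = ∑ i, r i • u i := by
    have h := congrArg WithLp.ofLp (b.sum_repr zE).symm
    simpa [r, u, zE, WithLp.ofLp_sum] using h
  have hr0 : ∀ i, lam i = 0 → r i = 0 := by
    intro i hi
    have hki : L *ᵥ u i = 0 := by rw [hLu i, hi, zero_smul]
    have hdot : u i ⬝ᵥ z = 0 := hkerchar (u i) hki
    have hri : r i = ∑ v, u i v * zE v := by
      show b.repr zE i = _
      rw [b.repr_apply_apply]
      simp only [PiLp.inner_apply, RCLike.inner_apply, starRingEnd_apply, star_trivial]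
      exact Finset.sum_congr rfl fun x _ => mul_comm _ _
    rw [hri, ← hdot]
    rfl

  -- the exponential applied to y
  have hywz : y = w + z := by
    funext v
    show y v = w v + (y v - w v)
    ring
  have hexp : ∀ t : ℝ, NormedSpace.exp (-(t • L)) *ᵥ y
      = w + ∑ i, (r i * Real.exp (-(t * lam i))) • u i := by
    intro t
    have hw0 : -(t • L) *ᵥ w = (0:ℝ) • w := by
      rw [Matrix.neg_mulVec, Matrix.smul_mulVec, hLw]
      simp
    have hui : ∀ i, -(t • L) *ᵥ u i = (-(t * lam i)) • u i := by
      intro i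
      rw [Matrix.neg_mulVec, Matrix.smul_mulVec, hLu i, smul_smul, ← neg_smul]
    rw [hywz, Matrix.mulVec_add, exp_mulVec_eigen _ w 0 hw0, Real.exp_zero, one_smul]
    congr 1
    rw [hzdecomp, ← Matrix.mulVecLin_apply, map_sum]
    refine Finset.sum_congr rfl fun i _ => ?_
    rw [_root_.map_smul, Matrix.mulVecLin_apply, exp_mulVec_eigen _ (u i) _ (hui i),
      smul_smul, mul_comm]
  -- convergence of the vector
  have hlimit : Filter.Tendsto (fun t : ℝ => w + ∑ i, (r i * Real.exp (-(t * lam i))) • u i)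
      Filter.atTop (nhds w) := by
    have h0 : Filter.Tendsto (fun t : ℝ => ∑ i, (r i * Real.exp (-(t * lam i))) • u i)
        Filter.atTop (nhds 0) := by
      have : (0 : Fin p → ℝ) = ∑ i : Fin p, (0 : Fin p → ℝ) := by simp
      rw [this]
      refine tendsto_finset_sum _ fun i _ => ?_
      rcases eq_or_lt_of_le (hlam0 i) with hi | hi
      · have : ∀ t : ℝ, (r i * Real.exp (-(t * lam i))) • u i = 0 := by
          intro t; rw [hr0 i hi.symm, zero_mul, zero_smul]
        simp only [this]
        exact tendsto_const_nhds
      · have h1 : Filter.Tendsto (fun t : ℝ => -(t * lam i)) Filter.atTop Filter.atBot := by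
          exact Filter.tendsto_neg_atTop_atBot.comp (Filter.Tendsto.atTop_mul_const hi Filter.tendsto_id)
        have h2 : Filter.Tendsto (fun t : ℝ => r i * Real.exp (-(t * lam i)))
            Filter.atTop (nhds (r i * 0)) :=
          Filter.Tendsto.const_mul _ (Real.tendsto_exp_atBot.comp h1)
        have h3 := h2.smul_const (u i)
        simpa using h3
    have := Filter.Tendsto.const_add w h0
    simpa using this
  have hmain : Filter.Tendsto (fun t : ℝ => NormedSpace.exp (-(t • L)) *ᵥ y) Filter.atTop (nhds w) := by
    rwa [show (fun t : ℝ => NormedSpace.exp (-(t • L)) *ᵥ y)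
      = (fun t : ℝ => w + ∑ i, (r i * Real.exp (-(t * lam i))) • u i) from funext hexp]
  -- compose with the continuous penalty map
  have hF : Continuous (fun x : Fin p → ℝ => ∑ ℓ, Real.sqrt |x ℓ|) := by
    refine continuous_finset_sum _ fun ℓ _ => ?_
    exact Real.continuous_sqrt.comp (continuous_abs.comp (continuous_apply ℓ))
  have hcomp := (hF.continuousAt (x := w)).tendsto.comp hmain
  have hFw : ∑ ℓ, Real.sqrt |w ℓ| = ∑ j, Real.sqrt ((C j).card) * Real.sqrt (S j) := by
    rw [hpart (fun ℓ => Real.sqrt |w ℓ|)]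
    refine Finset.sum_congr rfl fun j _ => ?_
    have hconst : ∀ v ∈ C j, Real.sqrt |w v| = Real.sqrt (S j) / Real.sqrt ((C j).card) := by
      intro v hv
      rw [hwmem j v hv, abs_of_nonneg (div_nonneg (hS0 j) (le_of_lt (hcard j))),
        Real.sqrt_div (hS0 j)]
    rw [Finset.sum_congr rfl hconst, Finset.sum_const, nsmul_eq_mul]
    rw [mul_div_assoc']
    rw [mul_comm ((C j).card : ℝ), mul_div_assoc, Real.div_sqrt, mul_comm]
  exact hFw ▸ hcomp
end
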